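/- Let R = ℂ[x₀,…,x₄] and let l₀, l₁, l₂, l₃ be ℂ-linearly independent linear forms in R. Suppose Q₁, …, Q₆, F ∈ R satisfy Q₁·l₂ − Q₂·l₁ + Q₃·l₀ = F and Q₃·l₃ + Q₄·l₂ − Q₅·l₁ + Q₆·l₀ = 0. Then F belongs to the ideal (l₁, l₂, l₀²) of R. -/

import Mathlib

open MvPolynomial

private lemma degree_one_single {m : Fin 5 →₀ ℕ} (h : Finsupp.degree m = 1) :
    ∃ j, m = Finsupp.single j 1 := by
  have hne : m ≠ 0 := by rintro rfl; simp at h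
  obtain ⟨j, hj⟩ := Finsupp.ne_iff.mp hne
  have hj' : m j ≠ 0 := by simpa using hj
  refine ⟨j, ?_⟩
  have hjs : j ∈ m.support := Finsupp.mem_support_iff.mpr hj'
  have hsum : m j + ∑ i ∈ m.support.erase j, m i = 1 := by
    rw [Finset.add_sum_erase _ _ hjs]; exact h
  have hmj : m j = 1 := by omega
  have hz : ∀ i, i ≠ j → m i = 0 := by
    intro i hi
    by_contra hmi
    have his : i ∈ m.support.erase j :=
      Finset.mem_erase.mpr ⟨hi, Finsupp.mem_support_iff.mpr hmi⟩
    have hle : m i ≤ ∑ k ∈ m.support.erase j, m k :=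
      Finset.single_le_sum (fun _ _ => Nat.zero_le _) his
    omega
  ext k
  rcases eq_or_ne k j with rfl | hk
  · simp [hmj]
  · simp [Finsupp.single_apply, Ne.symm hk, hz k hk]

private lemma eq_sum_C_mul_X {p : MvPolynomial (Fin 5) ℂ} (hp : p.IsHomogeneous 1) :
    p = ∑ j : Fin 5, C (coeff (Finsupp.single j 1) p) * X j := by
  ext m
  rw [coeff_sum]
  simp only [coeff_C_mul, coeff_X']
  by_cases hm : ∃ j, m = Finsupp.single j 1
  · obtain ⟨j, rfl⟩ := hm
    rw [Finset.sum_eq_single j]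
    · simp
    · intro b _ hb
      rw [if_neg, mul_zero]
      intro hbj
      exact hb (Finsupp.single_left_injective one_ne_zero hbj)
    · simp
  · have h0 : coeff m p = 0 := by
      by_contra h
      have hw := hp h
      refine hm (degree_one_single ?_)
      rwa [Finsupp.degree_eq_weight_one]
    rw [h0]
    refine (Finset.sum_eq_zero ?_).symm
    intro j _
    rw [if_neg, mul_zero]
    exact fun hje => hm ⟨j, hje.symm⟩

private lemma fA_comp (A B : Matrix (Fin 5) (Fin 5) ℂ) (i : Fin 5) :
    (aeval (fun i : Fin 5 => ∑ j : Fin 5, C (A j i) * X j) :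
        MvPolynomial (Fin 5) ℂ →ₐ[ℂ] MvPolynomial (Fin 5) ℂ)
      (∑ j : Fin 5, C (B j i) * X j) = ∑ j : Fin 5, C ((A * B) j i) * X j := by
  rw [map_sum]
  simp only [map_mul, aeval_C, aeval_X, algebraMap_eq]
  calc ∑ j : Fin 5, C (B j i) * ∑ k : Fin 5, C (A k j) * X k
      = ∑ j : Fin 5, ∑ k : Fin 5, C (B j i) * (C (A k j) * X k) := by
        simp_rw [Finset.mul_sum]
    _ = ∑ k : Fin 5, ∑ j : Fin 5, C (B j i) * (C (A k j) * X k) := Finset.sum_comm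
    _ = ∑ k : Fin 5, C ((A * B) k i) * X k := by
        refine Finset.sum_congr rfl fun k _ => ?_
        rw [Matrix.mul_apply, map_sum, Finset.sum_mul]
        refine Finset.sum_congr rfl fun j _ => ?_
        rw [C_mul]; ring

theorem stmt_5 (l₀ l₁ l₂ l₃ : MvPolynomial (Fin 5) ℂ)
    (h₀ : l₀.IsHomogeneous 1) (h₁ : l₁.IsHomogeneous 1)
    (h₂ : l₂.IsHomogeneous 1) (h₃ : l₃.IsHomogeneous 1)
    (hind : LinearIndependent ℂ ![l₀, l₁, l₂, l₃])
    (Q₁ Q₂ Q₃ Q₄ Q₅ Q₆ F : MvPolynomial (Fin 5) ℂ)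
    (e₁ : Q₁ * l₂ - Q₂ * l₁ + Q₃ * l₀ = F)
    (e₂ : Q₃ * l₃ + Q₄ * l₂ - Q₅ * l₁ + Q₆ * l₀ = 0) :
    F ∈ Ideal.span {l₁, l₂, l₀ ^ 2} := by
  classical
  set l : Fin 4 → MvPolynomial (Fin 5) ℂ := ![l₀, l₁, l₂, l₃] with hl_def
  have hl0 : l 0 = l₀ := rfl
  have hl1 : l 1 = l₁ := rfl
  have hl2 : l 2 = l₂ := rfl
  have hl3 : l 3 = l₃ := rfl
  have hlh : ∀ k, (l k).IsHomogeneous 1 := by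
    intro k; fin_cases k <;> assumption
  set v : Fin 4 → (Fin 5 → ℂ) := fun k j => coeff (Finsupp.single j 1) (l k) with hv_def
  have hlv : ∀ k, l k = ∑ j : Fin 5, C (v k j) * X j := fun k => eq_sum_C_mul_X (hlh k)
  -- linear independence of coefficient vectors
  have hvind : LinearIndependent ℂ v := by
    rw [Fintype.linearIndependent_iff] at hind ⊢
    intro g hg
    refine hind g ?_
    have hmem : (∑ k, g k • l k) ∈ homogeneousSubmodule (Fin 5) ℂ 1 :=
      Submodule.sum_mem _ fun k _ => Submodule.smul_mem _ _ (hlh k)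
    have hco : ∀ j : Fin 5, coeff (Finsupp.single j 1) (∑ k, g k • l k) = 0 := by
      intro j
      have h1 := congr_fun hg j
      simp only [Finset.sum_apply, Pi.smul_apply, smul_eq_mul, Pi.zero_apply] at h1
      rw [coeff_sum]
      simp only [coeff_smul, smul_eq_mul]
      exact h1
    rw [eq_sum_C_mul_X ((mem_homogeneousSubmodule _ _).mp hmem)]
    simp [hco]
  -- extend to a basis of ℂ^5
  obtain ⟨u, hw⟩ := exists_linearIndependent_snoc_of_lt_finrank hvind
    (by simp [Module.finrank_fintype_fun_eq_card])
  set w : Fin 5 → (Fin 5 → ℂ) := Fin.snoc v u with hw_def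
  let b : Module.Basis (Fin 5) ℂ (Fin 5 → ℂ) :=
    basisOfLinearIndependentOfCardEqFinrank hw
      (by simp [Module.finrank_fintype_fun_eq_card])
  have hb : ⇑b = w := coe_basisOfLinearIndependentOfCardEqFinrank hw _
  set P : Matrix (Fin 5) (Fin 5) ℂ := (Pi.basisFun ℂ (Fin 5)).toMatrix ⇑b with hP_def
  have hP : ∀ i j, P j i = w i j := by
    intro i j
    rw [hP_def, Module.Basis.toMatrix_apply, hb, Pi.basisFun_repr]
  have hInv : Invertible P := (Pi.basisFun ℂ (Fin 5)).invertibleToMatrix b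
  set N : Matrix (Fin 5) (Fin 5) ℂ := ⅟P with hN_def
  -- the two algebra maps
  set φ : MvPolynomial (Fin 5) ℂ →ₐ[ℂ] MvPolynomial (Fin 5) ℂ :=
    aeval (fun i : Fin 5 => ∑ j : Fin 5, C (P j i) * X j) with hφ_def
  set ψ : MvPolynomial (Fin 5) ℂ →ₐ[ℂ] MvPolynomial (Fin 5) ℂ :=
    aeval (fun i : Fin 5 => ∑ j : Fin 5, C (N j i) * X j) with hψ_def
  have hcomp : ∀ (A B : Matrix (Fin 5) (Fin 5) ℂ),
      (aeval (fun i : Fin 5 => ∑ j : Fin 5, C (A j i) * X j) :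
        MvPolynomial (Fin 5) ℂ →ₐ[ℂ] MvPolynomial (Fin 5) ℂ).comp
        (aeval (fun i : Fin 5 => ∑ j : Fin 5, C (B j i) * X j)) =
      aeval (fun i : Fin 5 => ∑ j : Fin 5, C ((A * B) j i) * X j) := by
    intro A B
    apply algHom_ext
    intro i
    simp only [AlgHom.comp_apply, aeval_X]
    exact fA_comp A B i
  have hid : (aeval (fun i : Fin 5 =>
      ∑ j : Fin 5, C ((1 : Matrix (Fin 5) (Fin 5) ℂ) j i) * X j) :
      MvPolynomial (Fin 5) ℂ →ₐ[ℂ] MvPolynomial (Fin 5) ℂ) = AlgHom.id ℂ _ := by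
    apply algHom_ext
    intro i
    simp [Matrix.one_apply, apply_ite C]
  have hψφ : ∀ p, ψ (φ p) = p := by
    intro p
    have h1 : ψ.comp φ = AlgHom.id ℂ _ := by
      rw [hψ_def, hφ_def, hcomp, invOf_mul_self, hid]
    calc ψ (φ p) = (ψ.comp φ) p := rfl
      _ = p := by rw [h1]; rfl
  have hφψ : ∀ p, φ (ψ p) = p := by
    intro p
    have h1 : φ.comp ψ = AlgHom.id ℂ _ := by
      rw [hψ_def, hφ_def, hcomp, mul_invOf_self, hid]
    calc φ (ψ p) = (φ.comp ψ) p := rfl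
      _ = p := by rw [h1]; rfl
  -- φ sends X (castSucc k) to l k
  have hφl : ∀ k : Fin 4, φ (X (Fin.castSucc k)) = l k := by
    intro k
    rw [hφ_def, aeval_X]
    rw [hlv k]
    refine Finset.sum_congr rfl fun j _ => ?_
    rw [hP, hw_def, Fin.snoc_castSucc]
  have hψl : ∀ k : Fin 4, ψ (l k) = X (Fin.castSucc k) := by
    intro k
    rw [← hφl k, hψφ]
  have hc0 : Fin.castSucc (0 : Fin 4) = (0 : Fin 5) := by decide
  have hc1 : Fin.castSucc (1 : Fin 4) = (1 : Fin 5) := by decide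
  have hc2 : Fin.castSucc (2 : Fin 4) = (2 : Fin 5) := by decide
  have hc3 : Fin.castSucc (3 : Fin 4) = (3 : Fin 5) := by decide
  have hψ0 : ψ l₀ = X (0 : Fin 5) := by rw [← hl0, hψl 0, hc0]
  have hψ1 : ψ l₁ = X (1 : Fin 5) := by rw [← hl1, hψl 1, hc1]
  have hψ2 : ψ l₂ = X (2 : Fin 5) := by rw [← hl2, hψl 2, hc2]
  have hψ3 : ψ l₃ = X (3 : Fin 5) := by rw [← hl3, hψl 3, hc3]
  have hφ0 : φ (X (0 : Fin 5)) = l₀ := by rw [← hc0, hφl 0, hl0]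
  have hφ1 : φ (X (1 : Fin 5)) = l₁ := by rw [← hc1, hφl 1, hl1]
  have hφ2 : φ (X (2 : Fin 5)) = l₂ := by rw [← hc2, hφl 2, hl2]
  -- the "evaluation killing X0 X1 X2" map
  set κ : MvPolynomial (Fin 5) ℂ →ₐ[ℂ] MvPolynomial (Fin 5) ℂ :=
    aeval (fun j : Fin 5 => if (j : ℕ) < 3 then 0 else X j) with hκ_def
  have hκX : ∀ j : Fin 5, κ (X j) = if (j : ℕ) < 3 then 0 else X j := by
    intro j; rw [hκ_def, aeval_X]
  have hκ0 : κ (X (0 : Fin 5)) = 0 := by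
    rw [hκX, if_pos (by norm_num [show ((0 : Fin 5) : ℕ) = 0 from rfl])]
  have hκ1 : κ (X (1 : Fin 5)) = 0 := by
    rw [hκX, if_pos (by norm_num [show ((1 : Fin 5) : ℕ) = 1 from rfl])]
  have hκ2 : κ (X (2 : Fin 5)) = 0 := by
    rw [hκX, if_pos (by norm_num [show ((2 : Fin 5) : ℕ) = 2 from rfl])]
  have hκ3 : κ (X (3 : Fin 5)) = X (3 : Fin 5) := by
    rw [hκX, if_neg (by norm_num [show ((3 : Fin 5) : ℕ) = 3 from rfl])]
  -- kernel of κ contains exactly the span of X0, X1, X2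
  have hB : ∀ p : MvPolynomial (Fin 5) ℂ,
      p - κ p ∈ Ideal.span ({X 0, X 1, X 2} : Set (MvPolynomial (Fin 5) ℂ)) := by
    intro p
    induction p using MvPolynomial.induction_on with
    | C a =>
        have : κ (C a) = C a := by rw [hκ_def]; simp [algebraMap_eq]
        rw [this, sub_self]
        exact Ideal.zero_mem _
    | add p q hp hq =>
        have h := Ideal.add_mem _ hp hq
        have he : p + q - κ (p + q) = p - κ p + (q - κ q) := by
          rw [map_add]; ring
        rw [he]; exact h
    | mul_X p j hp =>
        rw [map_mul, hκX]
        by_cases hj : (j : ℕ) < 3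
        · rw [if_pos hj, mul_zero, sub_zero]
          refine Ideal.mul_mem_left _ _ (Ideal.subset_span ?_)
          have hj3 : j = 0 ∨ j = 1 ∨ j = 2 := by
            revert hj; fin_cases j <;> simp
          rcases hj3 with rfl | rfl | rfl <;> simp
        · rw [if_neg hj]
          have he : p * X j - κ p * X j = (p - κ p) * X j := by ring
          rw [he]
          exact Ideal.mul_mem_right _ _ hp
  have hker : ∀ p : MvPolynomial (Fin 5) ℂ, κ p = 0 →
      p ∈ Ideal.span ({X 0, X 1, X 2} : Set (MvPolynomial (Fin 5) ℂ)) := by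
    intro p hp
    have := hB p
    rwa [hp, sub_zero] at this
  -- use e₂
  have hQ3X3 : κ (ψ Q₃) * X (3 : Fin 5) = 0 := by
    have h := congrArg (fun p => κ (ψ p)) e₂
    simp only [map_add, map_sub, map_mul, map_zero, hψ0, hψ1, hψ2, hψ3,
      hκ0, hκ1, hκ2, hκ3, mul_zero, add_zero, sub_zero, zero_add] at h
    exact h
  have hQ3κ : κ (ψ Q₃) = 0 := by
    rcases mul_eq_zero.mp hQ3X3 with h | h
    · exact h
    · exact absurd h (X_ne_zero _)
  obtain ⟨A, z, hz, hQa⟩ := Ideal.mem_span_insert.mp (hker _ hQ3κ)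
  obtain ⟨Bc, Cc, hz'⟩ := Ideal.mem_span_pair.mp hz
  -- pull back through φ
  have hQ3eq : Q₃ = φ A * l₀ + (φ Bc * l₁ + φ Cc * l₂) := by
    have := congrArg φ hQa
    rw [hφψ] at this
    rw [this, ← hz']
    simp only [map_add, map_mul, hφ0, hφ1, hφ2]
  -- final assembly
  have hF : F = (-Q₂ + φ Bc * l₀) * l₁ + ((Q₁ + φ Cc * l₀) * l₂ + φ A * l₀ ^ 2) := by
    rw [← e₁, hQ3eq]; ring
  rw [hF]
  have m1 : l₁ ∈ Ideal.span ({l₁, l₂, l₀ ^ 2} : Set (MvPolynomial (Fin 5) ℂ)) :=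
    Ideal.subset_span (by simp)
  have m2 : l₂ ∈ Ideal.span ({l₁, l₂, l₀ ^ 2} : Set (MvPolynomial (Fin 5) ℂ)) :=
    Ideal.subset_span (by simp)
  have m3 : l₀ ^ 2 ∈ Ideal.span ({l₁, l₂, l₀ ^ 2} : Set (MvPolynomial (Fin 5) ℂ)) :=
    Ideal.subset_span (by simp)
  exact Ideal.add_mem _ (Ideal.mul_mem_left _ _ m1)
    (Ideal.add_mem _ (Ideal.mul_mem_left _ _ m2) (Ideal.mul_mem_left _ _ m3))
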